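/- Let k ≥ 1, let V_k ⊊ S*_k be a proper subspace, and let x^u be the largest monomial of degree k (with respect to the fixed monomial order) that does not lie in V_k. Then there exists at most one index i ∈ {0,1,…,n} such that c_i(x^u) ∉ S_1 ⌟ V_k. -/

import Mathlib

open MvPolynomial

noncomputable section

/-- The contraction operator `c_i` (apolarity action of the `i`-th dual variable):
`c_i(x^u) = x^{u−e_i}` if `u_i > 0` and `c_i(x^u) = 0` otherwise, extended linearly. -/
def contract {n : ℕ} (i : Fin (n + 1)) (f : MvPolynomial (Fin (n + 1)) ℂ) :
    MvPolynomial (Fin (n + 1)) ℂ :=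
  ∑ u ∈ f.support,
    if u i = 0 then 0 else monomial (u - Finsupp.single i 1) (f.coeff u)

/-- `S_1 ⌟ V`: the span of all contractions `c_i(f)` with `f ∈ V`. -/
def contractSpan {n : ℕ} (V : Submodule ℂ (MvPolynomial (Fin (n + 1)) ℂ)) :
    Submodule ℂ (MvPolynomial (Fin (n + 1)) ℂ) :=
  Submodule.span ℂ {g | ∃ i : Fin (n + 1), ∃ f ∈ V, g = contract i f}

lemma contract_monomial {n : ℕ} (i : Fin (n + 1)) (u : Fin (n + 1) →₀ ℕ) (c : ℂ)
    (hc : c ≠ 0) :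
    contract i (monomial u c) =
      if u i = 0 then 0 else monomial (u - Finsupp.single i 1) c := by
  unfold contract
  rw [support_monomial, if_neg hc, Finset.sum_singleton]
  simp [coeff_monomial]

/-- If `x^u` is the largest degree-`k` monomial not in a proper subspace `V_k ⊊ S*_k`,
then there is at most one `i` with `c_i(x^u) ∉ S_1 ⌟ V_k`. -/
theorem at_most_one_contraction_escapes (n k : ℕ) (hn : 1 ≤ n) (hk : 1 ≤ k)
    (lo : LinearOrder (Fin (n + 1) →₀ ℕ))
    (hlo : ∀ a b c : Fin (n + 1) →₀ ℕ, lo.lt a b → lo.lt (a + c) (b + c))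
    (Vk : Submodule ℂ (MvPolynomial (Fin (n + 1)) ℂ))
    (hVk : Vk ≤ homogeneousSubmodule (Fin (n + 1)) ℂ k)
    (hproper : Vk ≠ homogeneousSubmodule (Fin (n + 1)) ℂ k)
    (u : Fin (n + 1) →₀ ℕ) (hu : ∑ j, u j = k)
    (humem : (monomial u 1 : MvPolynomial (Fin (n + 1)) ℂ) ∉ Vk)
    (hmax : ∀ v : Fin (n + 1) →₀ ℕ, (∑ j, v j = k) →
      (monomial v 1 : MvPolynomial (Fin (n + 1)) ℂ) ∉ Vk → lo.le v u) :
    ∀ i i' : Fin (n + 1),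
      contract i (monomial u 1) ∉ contractSpan Vk →
      contract i' (monomial u 1) ∉ contractSpan Vk → i = i' := by
  intro i i' hi hi'
  by_contra hne
  have hui : u i ≠ 0 := by
    intro h
    apply hi
    rw [contract_monomial _ _ _ one_ne_zero, if_pos h]
    exact (contractSpan Vk).zero_mem
  have hui' : u i' ≠ 0 := by
    intro h
    apply hi'
    rw [contract_monomial _ _ _ one_ne_zero, if_pos h]
    exact (contractSpan Vk).zero_mem
  have key : ∀ a b : Fin (n + 1), a ≠ b → u a ≠ 0 → u b ≠ 0 →
      lo.lt (Finsupp.single a 1) (Finsupp.single b 1) →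
      contract a (monomial u 1) ∈ contractSpan Vk := by
    intro a b hab hua hub hlt
    set w := u - Finsupp.single a 1 + Finsupp.single b 1 with hw
    have hle : Finsupp.single a 1 ≤ u :=
      Finsupp.single_le_iff.mpr (Nat.one_le_iff_ne_zero.mpr hua)
    have hcancel : u - Finsupp.single a 1 + Finsupp.single a 1 = u :=
      tsub_add_cancel_of_le hle
    have hult : lo.lt u w := by
      have h := hlo _ _ (u - Finsupp.single a 1) hlt
      rwa [add_comm (Finsupp.single a 1), add_comm (Finsupp.single b 1), hcancel] at h
    have hwe : w + Finsupp.single a 1 = u + Finsupp.single b 1 := by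
      rw [hw, add_right_comm, hcancel]
    have hwdeg : ∑ j, w j = k := by
      have h := congrArg (fun f : Fin (n + 1) →₀ ℕ => ∑ j, f j) hwe
      simp only [Finsupp.add_apply, Finset.sum_add_distrib, Finsupp.single_apply, hu,
        Finset.sum_ite_eq, Finset.mem_univ, if_true] at h
      omega
    have hwV : (monomial w 1 : MvPolynomial (Fin (n + 1)) ℂ) ∈ Vk := by
      by_contra hnot
      have hle' := hmax w hwdeg hnot
      exact absurd hle' ((lo.lt_iff_le_not_ge _ _).mp hult).2
    have hwb : w b ≠ 0 := by
      rw [hw]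
      simp [Finsupp.add_apply]
    have hcb : contract b (monomial w 1) = monomial (u - Finsupp.single a 1) 1 := by
      rw [contract_monomial _ _ _ one_ne_zero, if_neg hwb]
      congr 1
      rw [hw, add_tsub_cancel_right]
    have heq : contract a (monomial u 1) = contract b (monomial w 1) := by
      rw [contract_monomial _ _ _ one_ne_zero, if_neg hua, hcb]
    rw [heq]
    exact Submodule.subset_span ⟨b, monomial w 1, hwV, rfl⟩
  have hne' : Finsupp.single i (1 : ℕ) ≠ Finsupp.single i' 1 := fun h =>
    hne (Finsupp.single_left_injective one_ne_zero h)
  rcases lo.le_total (Finsupp.single i 1) (Finsupp.single i' 1) with h | h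
  · have hlt : lo.lt (Finsupp.single i 1) (Finsupp.single i' 1) :=
      (lo.lt_iff_le_not_ge _ _).mpr ⟨h, fun h' => hne' (lo.le_antisymm _ _ h h')⟩
    exact hi (key i i' hne hui hui' hlt)
  · have hlt : lo.lt (Finsupp.single i' 1) (Finsupp.single i 1) :=
      (lo.lt_iff_le_not_ge _ _).mpr ⟨h, fun h' => hne'.symm (lo.le_antisymm _ _ h h')⟩
    exact hi' (key i' i (Ne.symm hne) hui' hui hlt)
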